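/- Let r ≥ 2, n ≥ 1, and k ≥ 1 be integers with k ≤ (r-1)n, let p ∈ {0, 1, ..., r-1}, and set t = rk - (1-p)(r-1), η = (r-1)n - k, D = (r-1)(rn+p-1), and μ = D(D-1)···(D-t+1) (the falling factorial of D of length t). Let w = e^{2πi/r} and suppose x_1, ..., x_η are complex numbers such that R_{rn+p}^{(t)}(X) = μ · ∏_{k=1}^{η} ∏_{l=0}^{r-1} (X - x_k w^l). Then μ · ∏_{k=1}^{η} x_k^r = (-1)^η · t! · C_r(rn + p - η - 1, η). -/

import Mathlib

noncomputable def RBon (r : ℕ) : ℕ → Polynomial ℂ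
  | 0 => 0
  | 1 => 1
  | n + 2 => ∑ i ∈ (Finset.range r).attach,
      Polynomial.X ^ (i : ℕ) * RBon r (n + 2 - (r - (i : ℕ)))
  decreasing_by
    have h := i.2
    rw [Finset.mem_range] at h
    omega

noncomputable def rnomial (r n j : ℕ) : ℕ :=
  ((∑ i ∈ Finset.range r, (Polynomial.X : Polynomial ℕ) ^ i) ^ n).coeff j

lemma rnomial_zero_right (r a : ℕ) (hr : 1 ≤ r) : rnomial r a 0 = 1 := by
  unfold rnomial
  rw [Polynomial.coeff_zero_eq_eval_zero]
  simp only [Polynomial.eval_pow, Polynomial.eval_finset_sum, Polynomial.eval_pow,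
    Polynomial.eval_X]
  rw [Finset.sum_eq_single 0]
  · simp
  · intro b _ hb; exact zero_pow hb
  · intro h; exact absurd (Finset.mem_range.2 hr) h

lemma rnomial_eq_zero (r a b : ℕ) (h : (r-1)*a < b) : rnomial r a b = 0 := by
  unfold rnomial
  apply Polynomial.coeff_eq_zero_of_natDegree_lt
  apply lt_of_le_of_lt _ h
  have hd : (∑ i ∈ Finset.range r, (Polynomial.X : Polynomial ℕ) ^ i).natDegree ≤ r - 1 := by
    apply le_trans (Polynomial.natDegree_sum_le _ _)
    apply Finset.sup_le
    intro i hi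
    apply le_trans (Polynomial.natDegree_X_pow_le i)
    exact Nat.le_sub_one_of_lt (Finset.mem_range.1 hi)
  calc ((∑ i ∈ Finset.range r, (Polynomial.X : Polynomial ℕ) ^ i) ^ a).natDegree
      ≤ a * (∑ i ∈ Finset.range r, (Polynomial.X : Polynomial ℕ) ^ i).natDegree :=
        Polynomial.natDegree_pow_le
    _ ≤ a * (r - 1) := Nat.mul_le_mul_left a hd
    _ = (r - 1) * a := mul_comm _ _

lemma rnomial_succ (r a b : ℕ) : rnomial r (a+1) b
    = ∑ d ∈ Finset.range r, if d ≤ b then rnomial r a (b-d) else 0 := by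
  unfold rnomial
  rw [pow_succ, mul_comm, Finset.sum_mul, Polynomial.finset_sum_coeff]
  apply Finset.sum_congr rfl
  intro d _
  rw [Polynomial.coeff_X_pow_mul']

lemma RBon_natDegree_le (r : ℕ) : ∀ m, (RBon r m).natDegree ≤ (r-1)*(m-1) := by
  intro m
  induction m using Nat.strong_induction_on with
  | _ m ih =>
    match m with
    | 0 => simp [RBon]
    | 1 => simp [RBon]
    | n + 2 =>
      rw [RBon]
      apply le_trans (Polynomial.natDegree_sum_le _ _)
      apply Finset.sup_le
      intro i _
      have hi : (i : ℕ) < r := Finset.mem_range.1 i.2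
      simp only [Function.comp_apply]
      by_cases hz : n + 2 ≤ r - (i:ℕ)
      · have h0 : n + 2 - (r - (i:ℕ)) = 0 := by omega
        rw [h0, show RBon r 0 = 0 by rw [RBon], mul_zero, Polynomial.natDegree_zero]
        exact Nat.zero_le _
      · push_neg at hz
        apply le_trans (Polynomial.natDegree_mul_le)
        show _ ≤ (r-1)*(n+1)
        have h1 : (Polynomial.X ^ (i:ℕ) : Polynomial ℂ).natDegree ≤ (i:ℕ) :=
          Polynomial.natDegree_X_pow_le _
        have h2 := ih (n + 2 - (r - (i:ℕ))) (by omega)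
        have key : (r-1)*((n + 2 - (r - (i:ℕ))) - 1) + (r-1)*(r-(i:ℕ)) = (r-1)*(n+1) := by
          rw [← Nat.mul_add]
          congr 1
          omega
        have hile : (i:ℕ) ≤ (r-1)*(r-(i:ℕ)) := by
          calc (i:ℕ) ≤ (r-1) * 1 := by omega
          _ ≤ (r-1)*(r-(i:ℕ)) := Nat.mul_le_mul_left _ (by omega)
        omega

lemma RBon_coeff (r : ℕ) (hr : 2 ≤ r) : ∀ m, 1 ≤ m → ∀ j, r*j ≤ (r-1)*(m-1) →
    (RBon r m).coeff ((r-1)*(m-1) - r*j) = (rnomial r (m-1-j) j : ℂ) := by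
  intro m
  induction m using Nat.strong_induction_on with
  | _ m ih =>
    match m with
    | 0 => intro h; omega
    | 1 =>
      intro _ j hj
      have h0 : r * j = 0 := by simpa using hj
      have hj0 : j = 0 := by
        rcases Nat.mul_eq_zero.1 h0 with h | h
        · omega
        · exact h
      subst hj0
      rw [RBon]
      simp [rnomial_zero_right r 0 (by omega)]
    | n + 2 =>
      intro _ j hj
      have hj' : r * j ≤ (r-1)*(n+1) := by simpa using hj
      have hjm : j ≤ n := by
        by_contra hc
        push_neg at hc
        have h1 : r * (n+1) ≤ r * j := Nat.mul_le_mul_left r hc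
        have h2 : (r-1)*(n+1) < r*(n+1) :=
          (Nat.mul_lt_mul_right (Nat.succ_pos n)).2 (by omega)
        omega
      have h21 : (r-1)*(n+2-1) = (r-1)*(n+1) := by norm_num
      have he : r * j + ((r-1)*(n+2-1) - r*j) = (r-1)*(n+1) := by omega
      set e := (r-1)*(n+2-1) - r*j with hedef
      have key : ∀ i, i < r → (Polynomial.X ^ i * RBon r (n + 2 - (r - i))).coeff e
          = (if r-1-i ≤ j then ((rnomial r (n-j) (j-(r-1-i)) : ℕ) : ℂ) else 0) := by
        intro i hi
        rw [Polynomial.coeff_X_pow_mul']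
        have hC : (r-1)*(r-i) = r*(r-1-i) + i := by
          zify [show 1 ≤ r by omega, show i ≤ r by omega, show i ≤ r - 1 by omega]
          ring
        by_cases hie : i ≤ e
        · rw [if_pos hie]
          by_cases hd : r-1-i ≤ j
          · rw [if_pos hd]
            have hm1 : 1 ≤ n + 2 - (r - i) := by omega
            set m' := n + 2 - (r - i) with hm'
            have hA : (r-1)*(m'-1) + (r-1)*(r-i) = (r-1)*(n+1) := by
              rw [← Nat.mul_add]; congr 1; omega
            have hB : r*(j - (r-1-i)) + r*(r-1-i) = r*j := by
              rw [← Nat.mul_add]; congr 1; omega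
            have hj2 : r*(j - (r-1-i)) ≤ (r-1)*(m'-1) := by omega
            have hei : e - i = (r-1)*(m'-1) - r*(j - (r-1-i)) := by omega
            rw [hei, ih m' (by omega) hm1 _ hj2]
            congr 2
            omega
          · rw [if_neg hd]
            push_neg at hd
            by_cases hz : n + 2 ≤ r - i
            · have h0 : n + 2 - (r - i) = 0 := by omega
              rw [h0, show RBon r 0 = 0 by rw [RBon], Polynomial.coeff_zero]
            · push_neg at hz
              set m' := n + 2 - (r - i) with hm'
              have hA : (r-1)*(m'-1) + (r-1)*(r-i) = (r-1)*(n+1) := by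
                rw [← Nat.mul_add]; congr 1; omega
              have hD : r*(j+1) ≤ r*(r-1-i) := Nat.mul_le_mul_left r (by omega)
              have hDd : r*(j+1) = r*j + r := by ring
              apply Polynomial.coeff_eq_zero_of_natDegree_lt
              exact lt_of_le_of_lt (RBon_natDegree_le r m') (by omega)
        · rw [if_neg hie]
          push_neg at hie
          by_cases hd : r-1-i ≤ j
          · rw [if_pos hd]
            have hG : r*j = (r-1)*j + j := by
              zify [show 1 ≤ r by omega]; ring
            have hE : (r-1)*(n-j) + (r-1)*j = (r-1)*n := by
              rw [← Nat.mul_add]; congr 1; omega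
            have hF : (r-1)*(n+1) = (r-1)*n + (r-1) := by ring
            rw [rnomial_eq_zero r (n-j) (j-(r-1-i)) (by omega)]
            simp
          · rw [if_neg hd]
      calc (RBon r (n+2)).coeff e
          = ∑ i ∈ (Finset.range r).attach,
              (Polynomial.X ^ (i:ℕ) * RBon r (n + 2 - (r - (i:ℕ)))).coeff e := by
            rw [RBon, Polynomial.finset_sum_coeff]
        _ = ∑ i ∈ Finset.range r,
              (Polynomial.X ^ i * RBon r (n + 2 - (r - i))).coeff e := by
            exact Finset.sum_attach (Finset.range r)
              (fun i => (Polynomial.X ^ i * RBon r (n + 2 - (r - i))).coeff e)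
        _ = ∑ i ∈ Finset.range r,
              (if r-1-i ≤ j then ((rnomial r (n-j) (j-(r-1-i)) : ℕ) : ℂ) else 0) := by
            apply Finset.sum_congr rfl
            intro i hi2
            exact key i (Finset.mem_range.1 hi2)
        _ = ∑ d ∈ Finset.range r,
              (if d ≤ j then ((rnomial r (n-j) (j-d) : ℕ) : ℂ) else 0) :=
            Finset.sum_range_reflect
              (fun d => if d ≤ j then ((rnomial r (n-j) (j-d) : ℕ) : ℂ) else 0) r
        _ = ((rnomial r (n+2-1-j) j : ℕ) : ℂ) := by
            have hrw : n + 2 - 1 - j = (n - j) + 1 := by omega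
            rw [hrw, rnomial_succ]
            push_cast [apply_ite (fun (x : ℕ) => (x : ℂ))]
            rfl

theorem stmt_8 (r n k : ℕ) (hr : 2 ≤ r) (hn : 1 ≤ n) (hk : 1 ≤ k)
    (hk2 : k ≤ (r - 1) * n)
    (p : ℕ) (hp : p ≤ r - 1)
    (t : ℕ) (ht : (t : ℤ) = (r : ℤ) * k - (1 - (p : ℤ)) * ((r : ℤ) - 1))
    (η : ℕ) (hη : η = (r - 1) * n - k)
    (D : ℕ) (hD : D = (r - 1) * (r * n + p - 1))
    (μ : ℕ) (hμ : μ = D.descFactorial t)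
    (w : ℂ) (hw : w = Complex.exp (2 * Real.pi * Complex.I / r))
    (x : Fin η → ℂ)
    (hfac : Polynomial.derivative^[t] (RBon r (r * n + p)) =
      Polynomial.C (μ : ℂ) * ∏ i : Fin η, ∏ l ∈ Finset.range r,
        (Polynomial.X - Polynomial.C (x i * w ^ l))) :
    (μ : ℂ) * ∏ i : Fin η, x i ^ r
      = (-1) ^ η * (t.factorial : ℂ) * (rnomial r (r * n + p - η - 1) η : ℂ) := by
  -- arithmetic facts
  have hrn : r ≤ r * n := Nat.le_mul_of_pos_right r hn
  have hm1 : 1 ≤ r * n + p := by omega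
  have hηZ : (η : ℤ) = ((r:ℤ) - 1) * n - k := by
    rw [hη]
    push_cast [Nat.cast_sub hk2]
    push_cast [Nat.cast_sub (show 1 ≤ r by omega)]
    ring
  have hmZ : ((r * n + p - 1 : ℕ) : ℤ) = (r:ℤ)*n + p - 1 := by
    push_cast [Nat.cast_sub hm1]
    ring_nf
  have hr1Z : ((r - 1 : ℕ) : ℤ) = (r:ℤ) - 1 := by
    push_cast [Nat.cast_sub (show 1 ≤ r by omega)]; ring
  have hk1Z : (1:ℤ) ≤ (k:ℤ) := by exact_mod_cast hk
  have hrZ : (2:ℤ) ≤ (r:ℤ) := by exact_mod_cast hr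
  have hpZ : (0:ℤ) ≤ (p:ℤ) := by positivity
  have hrk : (r:ℤ) ≤ (r:ℤ)*(k:ℤ) := le_mul_of_one_le_right (by linarith) hk1Z
  have hle : ((r*η : ℕ) : ℤ) ≤ (((r-1)*(r*n+p-1) : ℕ) : ℤ) := by
    push_cast [hηZ, hmZ, hr1Z]
    nlinarith [mul_nonneg (show (0:ℤ) ≤ (r:ℤ)-1 by linarith) hpZ, hrk]
  have htZ : (t : ℤ) = (((r-1)*(r*n+p-1) : ℕ) : ℤ) - ((r*η : ℕ) : ℤ) := by
    push_cast [hηZ, hmZ, hr1Z, ht]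
    ring
  have hηle : r * η ≤ (r-1)*((r*n+p) - 1) := by omega
  have htval : t = (r-1)*((r*n+p) - 1) - r*η := by omega
  -- coefficient of RBon
  have hcoeff : (RBon r (r*n+p)).coeff t = (rnomial r (r*n+p-η-1) η : ℂ) := by
    rw [htval]
    have := RBon_coeff r hr (r*n+p) hm1 η hηle
    rw [this]
    congr 2
    omega
  -- product of roots of unity
  have hrC : (r : ℂ) ≠ 0 := Nat.cast_ne_zero.2 (by omega)
  have hwprod : ∏ l ∈ Finset.range r, w ^ l = (-1 : ℂ) ^ (r - 1) := by
    rw [Finset.prod_pow_eq_pow_sum]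
    have hNsum : (∑ l ∈ Finset.range r, l) * 2 = r * (r - 1) := Finset.sum_range_id_mul_two r
    set N := ∑ l ∈ Finset.range r, l with hN
    have hNC : (N : ℂ) * 2 = (r : ℂ) * ((r:ℂ) - 1) := by
      have h := congrArg (fun z : ℕ => (z : ℂ)) hNsum
      push_cast [Nat.cast_sub (show 1 ≤ r by omega)] at h
      linear_combination h
    rw [hw, ← Complex.exp_nat_mul]
    have harg : (N : ℂ) * (2 * Real.pi * Complex.I / r) = ((r - 1 : ℕ) : ℂ) * (Real.pi * Complex.I) := by
      push_cast [Nat.cast_sub (show 1 ≤ r by omega)]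
      field_simp
      linear_combination hNC
    rw [harg, Complex.exp_nat_mul, Complex.exp_pi_mul_I]
  have hfactor : ∀ i : Fin η, ∏ l ∈ Finset.range r, (-(x i * w ^ l)) = -(x i ^ r) := by
    intro i
    have step : ∏ l ∈ Finset.range r, (-(x i * w ^ l))
        = ((-1 : ℂ)^r * x i ^ r) * ∏ l ∈ Finset.range r, w ^ l := by
      calc ∏ l ∈ Finset.range r, (-(x i * w ^ l))
          = ∏ l ∈ Finset.range r, (((-1:ℂ) * x i) * w ^ l) :=
            Finset.prod_congr rfl (fun l _ => by ring)
        _ = (∏ l ∈ Finset.range r, ((-1:ℂ) * x i)) * ∏ l ∈ Finset.range r, w ^ l :=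
            Finset.prod_mul_distrib
        _ = ((-1:ℂ) * x i)^r * ∏ l ∈ Finset.range r, w ^ l := by
            rw [Finset.prod_const, Finset.card_range]
        _ = ((-1 : ℂ)^r * x i ^ r) * ∏ l ∈ Finset.range r, w ^ l := by rw [mul_pow]
    rw [step, hwprod]
    have : (-1 : ℂ)^r * (-1 : ℂ)^(r-1) = -1 := by
      rw [← pow_add]
      exact Odd.neg_one_pow ⟨r - 1, by omega⟩
    calc (-1 : ℂ)^r * x i ^ r * (-1:ℂ)^(r-1) = ((-1 : ℂ)^r * (-1:ℂ)^(r-1)) * x i ^ r := by ring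
      _ = -(x i ^ r) := by rw [this]; ring
  -- take coeff 0 of hfac
  have h0 := congrArg (fun q => Polynomial.coeff q 0) hfac
  simp only [Polynomial.coeff_iterate_derivative, zero_add, Nat.descFactorial_self,
    Polynomial.coeff_C_mul, smul_eq_mul, nsmul_eq_mul] at h0
  rw [Polynomial.coeff_zero_eq_eval_zero, Polynomial.eval_prod] at h0
  simp only [Polynomial.eval_prod, Polynomial.eval_sub, Polynomial.eval_X, Polynomial.eval_C,
    zero_sub] at h0
  rw [hcoeff] at h0
  have h1 : (t.factorial : ℂ) * (rnomial r (r*n+p-η-1) η : ℂ)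
      = (μ : ℂ) * ((-1:ℂ)^η * ∏ i : Fin η, x i ^ r) := by
    rw [h0]
    congr 1
    calc ∏ i : Fin η, ∏ l ∈ Finset.range r, (-(x i * w ^ l))
        = ∏ i : Fin η, (-(x i ^ r)) := Finset.prod_congr rfl (fun i _ => hfactor i)
      _ = ∏ i : Fin η, ((-1 : ℂ) * x i ^ r) := by simp
      _ = (-1:ℂ)^η * ∏ i : Fin η, x i ^ r := by
          rw [Finset.prod_mul_distrib, Finset.prod_const, Finset.card_univ, Fintype.card_fin]
  have hsq : ((-1:ℂ))^η * ((-1:ℂ))^η = 1 := by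
    rw [← pow_add]
    exact Even.neg_one_pow ⟨η, by ring⟩
  calc (μ : ℂ) * ∏ i : Fin η, x i ^ r
      = ((-1:ℂ)^η * (-1:ℂ)^η) * ((μ : ℂ) * ∏ i : Fin η, x i ^ r) := by rw [hsq, one_mul]
    _ = (-1:ℂ)^η * ((μ : ℂ) * ((-1:ℂ)^η * ∏ i : Fin η, x i ^ r)) := by ring
    _ = (-1:ℂ)^η * ((t.factorial : ℂ) * (rnomial r (r*n+p-η-1) η : ℂ)) := by rw [h1]
    _ = (-1) ^ η * (t.factorial : ℂ) * (rnomial r (r * n + p - η - 1) η : ℂ) := by ring
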